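/- (Stability of the linearization at the origin.) Suppose f satisfies the local behavior assumptions and the system x_{k+1} = f(k, x_k) is uniformly exponentially stable in D (there exist d > 0 and λ ∈ (0,1) such that every solution with x_{k₀} = ξ ∈ D satisfies ‖x_k‖ ≤ d‖ξ‖λ^{k−k₀} for all k ≥ k₀). Define A(k) := (∂f/∂x)(k, 0), the Jacobian of f(k, ·) at the origin. Then the linear time-varying system z_{k+1} = A(k) z_k is uniformly exponentially stable: there exist d_A > 0 and λ_A ∈ (0,1) such that for every k₀, every k ≥ k₀ and every ξ ∈ ℝⁿ, ‖A(k−1) A(k−2) ⋯ A(k₀) ξ‖ ≤ d_A λ_A^{k−k₀} ‖ξ‖. -/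

import Mathlib

section Aux
variable {E : Type*} [NormedAddCommGroup E] [NormedSpace ℝ E]

/-- Product of linear maps `A (k₀+m-1) ∘ ... ∘ A k₀`. -/
noncomputable def linProd (A : ℕ → (E →L[ℝ] E)) (k₀ : ℕ) : ℕ → (E →L[ℝ] E)
  | 0 => ContinuousLinearMap.id ℝ E
  | m+1 => (A (k₀+m)).comp (linProd A k₀ m)

lemma linProd_succ (A : ℕ → (E →L[ℝ] E)) (k₀ m : ℕ) :
    linProd A k₀ (m+1) = (A (k₀+m)).comp (linProd A k₀ m) := rfl

lemma linProd_norm_le (A : ℕ → (E →L[ℝ] E)) (B : ℝ) (hB : 1 ≤ B)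
    (hA : ∀ k, ‖A k‖ ≤ B) (k₀ m : ℕ) : ‖linProd A k₀ m‖ ≤ B ^ m := by
  induction m with
  | zero => simpa [linProd] using ContinuousLinearMap.norm_id_le
  | succ m ih =>
    calc ‖linProd A k₀ (m+1)‖ ≤ ‖A (k₀+m)‖ * ‖linProd A k₀ m‖ :=
          ContinuousLinearMap.opNorm_comp_le _ _
    _ ≤ B * B ^ m :=
          mul_le_mul (hA _) ih (norm_nonneg _) (le_trans zero_le_one hB)
    _ = B ^ (m+1) := by ring

lemma linProd_add (A : ℕ → (E →L[ℝ] E)) (k₀ a b : ℕ) :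
    linProd A k₀ (a+b) = (linProd A (k₀+a) b).comp (linProd A k₀ a) := by
  induction b with
  | zero => simp [linProd]
  | succ b ih =>
    show linProd A k₀ ((a+b)+1) = _
    rw [linProd_succ, ih, linProd_succ, ContinuousLinearMap.comp_assoc,
      Nat.add_assoc]

lemma linProd_sol (A : ℕ → (E →L[ℝ] E)) (k₀ : ℕ) (z : ℕ → E)
    (hz : ∀ k, k₀ ≤ k → z (k+1) = A k (z k)) (m : ℕ) :
    z (k₀+m) = linProd A k₀ m (z k₀) := by
  induction m with
  | zero => simp [linProd]
  | succ m ih =>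
    have h : z (k₀+m+1) = A (k₀+m) (z (k₀+m)) := hz _ (Nat.le_add_right _ _)
    rw [← Nat.add_assoc, h, ih, linProd_succ]; rfl

/-- Nonlinear solution starting at time `k₀` with value `ξ`, indexed by steps. -/
noncomputable def nlSol {α : Type*} (f : ℕ → α → α) (k₀ : ℕ) (ξ : α) : ℕ → α
  | 0 => ξ
  | m+1 => f (k₀+m) (nlSol f k₀ ξ m)

lemma nlSol_zero {α : Type*} (f : ℕ → α → α) (k₀ : ℕ) (ξ : α) :
    nlSol f k₀ ξ 0 = ξ := rfl

lemma nlSol_succ {α : Type*} (f : ℕ → α → α) (k₀ : ℕ) (ξ : α) (m : ℕ) :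
    nlSol f k₀ ξ (m+1) = f (k₀+m) (nlSol f k₀ ξ m) := rfl

end Aux

set_option maxHeartbeats 1600000 in
/-- Uniform exponential stability of the linearization at the origin. -/
theorem linearization_uniformly_exponentially_stable
    (n : ℕ) (D : Set (EuclideanSpace ℝ (Fin n)))
    (f : ℕ → EuclideanSpace ℝ (Fin n) → EuclideanSpace ℝ (Fin n))
    (Lf d lam r₀ Abar LJ : ℝ)
    (J : ℕ → EuclideanSpace ℝ (Fin n) →
      (EuclideanSpace ℝ (Fin n) →L[ℝ] EuclideanSpace ℝ (Fin n)))
    (hD : IsCompact D) (h0D : (0 : EuclideanSpace ℝ (Fin n)) ∈ D)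
    (hinv : ∀ k, ∀ x ∈ D, f k x ∈ D)
    (hf0 : ∀ k, f k 0 = 0)
    (hLf : 0 < Lf)
    (hLip : ∀ k, ∀ p ∈ D, ∀ q ∈ D, ‖f k p - f k q‖ ≤ Lf * ‖p - q‖)
    (hr₀ : 0 < r₀)
    (hball : Metric.ball (0 : EuclideanSpace ℝ (Fin n)) r₀ ⊆ D)
    (hJ : ∀ k, ∀ x ∈ Metric.ball (0 : EuclideanSpace ℝ (Fin n)) r₀,
      HasFDerivAt (f k) (J k x) x)
    (hAbar : 0 < Abar) (hLJ : 0 < LJ)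
    (hJbound : ∀ k, ∀ x ∈ Metric.ball (0 : EuclideanSpace ℝ (Fin n)) r₀,
      ‖J k x‖ ≤ Abar)
    (hJLip : ∀ k, ∀ x ∈ Metric.ball (0 : EuclideanSpace ℝ (Fin n)) r₀,
      ∀ y ∈ Metric.ball (0 : EuclideanSpace ℝ (Fin n)) r₀,
      ‖J k x - J k y‖ ≤ LJ * ‖x - y‖)
    (hd : 0 < d) (hlam : 0 < lam ∧ lam < 1)
    (hES : ∀ (k₀ : ℕ) (x : ℕ → EuclideanSpace ℝ (Fin n)), x k₀ ∈ D →
      (∀ k, k₀ ≤ k → x (k + 1) = f k (x k)) →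
      ∀ k, k₀ ≤ k → ‖x k‖ ≤ d * ‖x k₀‖ * lam ^ (k - k₀)) :
    ∃ dA lamA : ℝ, 0 < dA ∧ 0 < lamA ∧ lamA < 1 ∧
      ∀ (k₀ : ℕ) (z : ℕ → EuclideanSpace ℝ (Fin n)),
        (∀ k, k₀ ≤ k → z (k + 1) = J k 0 (z k)) →
        ∀ k, k₀ ≤ k → ‖z k‖ ≤ dA * lamA ^ (k - k₀) * ‖z k₀‖ := by
  obtain ⟨hlam0, hlam1⟩ := hlam
  set A : ℕ → (EuclideanSpace ℝ (Fin n) →L[ℝ] EuclideanSpace ℝ (Fin n)) :=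
    fun k => J k 0 with hAdef
  set c := max d 1 with hcdef
  have hc1 : (1:ℝ) ≤ c := le_max_right _ _
  have hdc : d ≤ c := le_max_left _ _
  have hc0 : (0:ℝ) < c := lt_of_lt_of_le one_pos hc1
  set B := max Abar 1 with hBdef
  have hB1 : (1:ℝ) ≤ B := le_max_right _ _
  have hB0 : (0:ℝ) < B := lt_of_lt_of_le one_pos hB1
  have h0ball : (0 : EuclideanSpace ℝ (Fin n)) ∈ Metric.ball 0 r₀ :=
    Metric.mem_ball_self hr₀
  have hAb : ∀ k, ‖A k‖ ≤ B := fun k => le_trans (hJbound k 0 h0ball) (le_max_left _ _)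
  -- Taylor-type estimate at the origin
  have htaylor : ∀ k (x : EuclideanSpace ℝ (Fin n)), ‖x‖ < r₀ →
      ‖f k x - A k x‖ ≤ LJ * ‖x‖ * ‖x‖ := by
    intro k x hx
    have hsub : Metric.closedBall (0 : EuclideanSpace ℝ (Fin n)) ‖x‖ ⊆ Metric.ball 0 r₀ :=
      Metric.closedBall_subset_ball hx
    have h1 : ∀ z ∈ Metric.closedBall (0 : EuclideanSpace ℝ (Fin n)) ‖x‖,
        HasFDerivWithinAt (f k) (J k z) (Metric.closedBall 0 ‖x‖) z :=
      fun z hz => (hJ k z (hsub hz)).hasFDerivWithinAt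
    have h2 : ∀ z ∈ Metric.closedBall (0 : EuclideanSpace ℝ (Fin n)) ‖x‖,
        ‖J k z - J k 0‖ ≤ LJ * ‖x‖ := by
      intro z hz
      have h := hJLip k z (hsub hz) 0 h0ball
      rw [sub_zero] at h
      refine h.trans ?_
      have hzn : ‖z‖ ≤ ‖x‖ := by simpa using hz
      exact mul_le_mul_of_nonneg_left hzn hLJ.le
    have key := Convex.norm_image_sub_le_of_norm_hasFDerivWithin_le' h1 h2
      (convex_closedBall _ _) (Metric.mem_closedBall_self (norm_nonneg x))
      (by simp [mem_closedBall_zero_iff] :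
        x ∈ Metric.closedBall (0 : EuclideanSpace ℝ (Fin n)) ‖x‖)
    have : ‖f k x - f k 0 - (J k 0) (x - 0)‖ ≤ LJ * ‖x‖ * ‖x - 0‖ := key
    simpa [hf0 k, hAdef] using this
  -- choice of N
  have htend : Filter.Tendsto (fun N => c * lam ^ N) Filter.atTop (nhds 0) := by
    simpa using (tendsto_pow_atTop_nhds_zero_of_lt_one hlam0.le hlam1).const_mul c
  obtain ⟨N, hN4, hN1⟩ := ((htend.eventually_lt_const (by norm_num : (0:ℝ) < 1/4)).and
    (Filter.eventually_ge_atTop 1)).exists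
  have hNpos : 0 < N := hN1
  have hNR : (0:ℝ) < (N:ℝ) := by exact_mod_cast hNpos
  set K := LJ * c^2 * (N:ℝ) * B^N with hKdef
  have hK0 : 0 < K := by
    rw [hKdef]
    exact mul_pos (mul_pos (mul_pos hLJ (pow_pos hc0 2)) hNR) (pow_pos hB0 N)
  set ε := min (r₀ / (2*c)) ((4*K)⁻¹) with hεdef
  have hε0 : 0 < ε :=
    lt_min (div_pos hr₀ (by linarith)) (inv_pos.mpr (by linarith))
  have hεr : ε ≤ r₀ / (2*c) := min_le_left _ _
  have hεK : ε ≤ (4*K)⁻¹ := min_le_right _ _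
  have hεr' : ε < r₀ := by
    refine lt_of_le_of_lt hεr ?_
    rw [div_lt_iff₀ (by linarith)]
    nlinarith
  have hcε : c * ε ≤ r₀ / 2 := by
    have h := mul_le_mul_of_nonneg_left hεr hc0.le
    calc c * ε ≤ c * (r₀/(2*c)) := h
    _ = r₀/2 := by field_simp
  have hKε : K * ε ≤ 1/4 := by
    have h := mul_le_mul_of_nonneg_left hεK hK0.le
    calc K * ε ≤ K * (4*K)⁻¹ := h
    _ = 1/4 := by field_simp
  -- contraction over N steps for small initial data
  have hsmall : ∀ (k₀ : ℕ) (ξ : EuclideanSpace ℝ (Fin n)), ‖ξ‖ ≤ ε →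
      ‖linProd A k₀ N ξ‖ ≤ (1/2) * ‖ξ‖ := by
    intro k₀ ξ hξ
    set g := nlSol f k₀ ξ with hgdef
    have hξr : ‖ξ‖ < r₀ := lt_of_le_of_lt hξ hεr'
    have hξD : ξ ∈ D := hball (by simpa [Metric.mem_ball, dist_zero_right] using hξr)
    have hES' : ∀ m, ‖g m‖ ≤ d * ‖ξ‖ * lam ^ m := by
      intro m
      set x : ℕ → EuclideanSpace ℝ (Fin n) := fun j => g (j - k₀) with hxdef
      have hx0 : x k₀ = ξ := by simp [hxdef, hgdef, nlSol_zero]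
      have hxrec : ∀ k, k₀ ≤ k → x (k+1) = f k (x k) := by
        intro k hk
        have h1 : k + 1 - k₀ = (k - k₀) + 1 := by omega
        have h2 : k₀ + (k - k₀) = k := by omega
        simp only [hxdef, h1, hgdef, nlSol_succ, h2]
      have h := hES k₀ x (by rw [hx0]; exact hξD) hxrec (k₀+m) (Nat.le_add_right _ _)
      rw [hx0] at h
      simpa [hxdef, Nat.add_sub_cancel_left] using h
    have hgc : ∀ m, ‖g m‖ ≤ c * ‖ξ‖ := by
      intro m
      have h1 := hES' m
      have h2 : lam ^ m ≤ 1 := pow_le_one₀ hlam0.le hlam1.le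
      have q1 : 0 ≤ (c - d) * ‖ξ‖ :=
        mul_nonneg (sub_nonneg.mpr hdc) (norm_nonneg ξ)
      have q2 : 0 ≤ d * ‖ξ‖ * (1 - lam ^ m) :=
        mul_nonneg (mul_nonneg hd.le (norm_nonneg ξ)) (sub_nonneg.mpr h2)
      nlinarith [q1, q2]
    have hgr : ∀ m, ‖g m‖ < r₀ := by
      intro m
      have h1 := hgc m
      have h2 : c * ‖ξ‖ ≤ c * ε := mul_le_mul_of_nonneg_left hξ hc0.le
      linarith
    have herr : ∀ m, ‖g m - linProd A k₀ m ξ‖ ≤ LJ * c^2 * (m:ℝ) * B^m * (‖ξ‖*‖ξ‖) := by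
      intro m
      induction m with
      | zero => simp [hgdef, nlSol_zero, linProd]
      | succ m ih =>
        have hstep : g (m+1) - linProd A k₀ (m+1) ξ
            = (f (k₀+m) (g m) - A (k₀+m) (g m))
              + A (k₀+m) (g m - linProd A k₀ m ξ) := by
          rw [map_sub, linProd_succ, ContinuousLinearMap.comp_apply]
          rw [hgdef, nlSol_succ]
          abel
        have hb1 : ‖f (k₀+m) (g m) - A (k₀+m) (g m)‖ ≤ LJ * ‖g m‖ * ‖g m‖ :=
          htaylor _ _ (hgr m)
        have hb2 : ‖A (k₀+m) (g m - linProd A k₀ m ξ)‖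
            ≤ B * ‖g m - linProd A k₀ m ξ‖ := by
          refine le_trans ((A (k₀+m)).le_opNorm _) ?_
          exact mul_le_mul_of_nonneg_right (hAb _) (norm_nonneg _)
        have h1 : LJ * ‖g m‖ * ‖g m‖ ≤ LJ * c^2 * (‖ξ‖*‖ξ‖) := by
          have q := mul_self_le_mul_self (norm_nonneg (g m)) (hgc m)
          calc LJ * ‖g m‖ * ‖g m‖ = LJ * (‖g m‖ * ‖g m‖) := by ring
          _ ≤ LJ * ((c * ‖ξ‖) * (c * ‖ξ‖)) := mul_le_mul_of_nonneg_left q hLJ.le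
          _ = LJ * c^2 * (‖ξ‖*‖ξ‖) := by ring
        have h2 : B * ‖g m - linProd A k₀ m ξ‖
            ≤ LJ * c^2 * (m:ℝ) * B^(m+1) * (‖ξ‖*‖ξ‖) := by
          have h := mul_le_mul_of_nonneg_left ih hB0.le
          calc B * ‖g m - linProd A k₀ m ξ‖
              ≤ B * (LJ * c^2 * (m:ℝ) * B^m * (‖ξ‖*‖ξ‖)) := h
          _ = LJ * c^2 * (m:ℝ) * B^(m+1) * (‖ξ‖*‖ξ‖) := by ring
        have h3 : (1:ℝ) ≤ B^(m+1) := one_le_pow₀ hB1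
        have h4 : (0:ℝ) ≤ LJ * c^2 * (‖ξ‖*‖ξ‖) :=
          mul_nonneg (mul_nonneg hLJ.le (sq_nonneg c)) (mul_self_nonneg _)
        calc ‖g (m+1) - linProd A k₀ (m+1) ξ‖
            ≤ ‖f (k₀+m) (g m) - A (k₀+m) (g m)‖
              + ‖A (k₀+m) (g m - linProd A k₀ m ξ)‖ := by
              rw [hstep]; exact norm_add_le _ _
        _ ≤ LJ * c^2 * ((m:ℝ)+1) * B^(m+1) * (‖ξ‖*‖ξ‖) := by
              push_cast
              nlinarith [hb1, hb2, h1, h2, h3, h4]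
        _ = LJ * c^2 * ((m+1 : ℕ):ℝ) * B^(m+1) * (‖ξ‖*‖ξ‖) := by push_cast; ring
    -- conclude contraction
    have hN := herr N
    rw [show LJ * c^2 * (N:ℝ) * B^N = K from hKdef.symm] at hN
    have hxN := hES' N
    have htri : ‖linProd A k₀ N ξ‖ ≤ ‖g N‖ + ‖g N - linProd A k₀ N ξ‖ := by
      calc ‖linProd A k₀ N ξ‖ = ‖g N - (g N - linProd A k₀ N ξ)‖ := by rw [sub_sub_cancel]
      _ ≤ _ := norm_sub_le _ _
    have p1 : (c * lam^N) * ‖ξ‖ ≤ (1/4) * ‖ξ‖ :=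
      mul_le_mul_of_nonneg_right hN4.le (norm_nonneg ξ)
    have p2 : d * ‖ξ‖ * lam^N ≤ (c*lam^N) * ‖ξ‖ := by
      nlinarith [mul_nonneg (mul_nonneg (sub_nonneg.mpr hdc) (pow_pos hlam0 N).le)
        (norm_nonneg ξ)]
    have p3 : K * (‖ξ‖*‖ξ‖) ≤ (K*ε) * ‖ξ‖ := by
      nlinarith [mul_nonneg (mul_nonneg hK0.le (norm_nonneg ξ)) (sub_nonneg.mpr hξ)]
    have p4 : (K*ε)*‖ξ‖ ≤ (1/4)*‖ξ‖ :=
      mul_le_mul_of_nonneg_right hKε (norm_nonneg ξ)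
    linarith
  -- operator norm contraction
  have hop : ∀ k₀, ‖linProd A k₀ N‖ ≤ 1/2 := by
    intro k₀
    refine ContinuousLinearMap.opNorm_le_bound _ (by norm_num) ?_
    intro ξ
    rcases eq_or_ne ξ 0 with rfl | hξ0
    · simp
    · have hnpos : 0 < ‖ξ‖ := norm_pos_iff.mpr hξ0
      set t := ε / ‖ξ‖ with htdef
      have ht0 : 0 < t := div_pos hε0 hnpos
      have hts : ‖t • ξ‖ ≤ ε := by
        rw [norm_smul, Real.norm_eq_abs, abs_of_pos ht0, htdef,
          div_mul_cancel₀ _ (ne_of_gt hnpos)]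
      have h := hsmall k₀ (t • ξ) hts
      rw [map_smul, norm_smul, norm_smul, Real.norm_eq_abs, abs_of_pos ht0] at h
      have h' : t * ‖linProd A k₀ N ξ‖ ≤ t * ((1/2) * ‖ξ‖) := by linarith [h]
      have := le_of_mul_le_mul_left h' ht0
      linarith
  -- blocks of length N
  have hblock : ∀ k₀ q, ‖linProd A k₀ (N*q)‖ ≤ (1/2:ℝ)^q := by
    intro k₀ q
    induction q with
    | zero =>
      have h0 : linProd A k₀ (N*0) = ContinuousLinearMap.id ℝ _ := by
        rw [Nat.mul_zero]; rfl
      rw [h0, pow_zero]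
      exact ContinuousLinearMap.norm_id_le
    | succ q ih =>
      have hNq : N*(q+1) = N*q + N := by ring
      rw [hNq, linProd_add]
      calc ‖(linProd A (k₀+N*q) N).comp (linProd A k₀ (N*q))‖
          ≤ ‖linProd A (k₀+N*q) N‖ * ‖linProd A k₀ (N*q)‖ :=
            ContinuousLinearMap.opNorm_comp_le _ _
      _ ≤ (1/2) * (1/2:ℝ)^q :=
            mul_le_mul (hop _) ih (norm_nonneg _) (by norm_num)
      _ = (1/2:ℝ)^(q+1) := by ring
  -- the decay rate
  set lamA := (1/2:ℝ) ^ ((N:ℝ)⁻¹) with hlamAdef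
  have hlamA0 : 0 < lamA := Real.rpow_pos_of_pos (by norm_num) _
  have hlamA1 : lamA < 1 :=
    Real.rpow_lt_one (by norm_num) (by norm_num) (inv_pos.mpr hNR)
  have hlamAN : lamA ^ N = 1/2 := by
    rw [hlamAdef]
    exact Real.rpow_inv_natCast_pow (by norm_num) (Nat.pos_iff_ne_zero.mp hNpos)
  refine ⟨2 * B^N, lamA, mul_pos two_pos (pow_pos hB0 N), hlamA0, hlamA1, ?_⟩
  intro k₀ z hz k hk
  have hz' : ∀ k, k₀ ≤ k → z (k+1) = A k (z k) := hz
  obtain ⟨m, rfl⟩ : ∃ m, k = k₀ + m := ⟨k - k₀, by omega⟩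
  rw [Nat.add_sub_cancel_left, linProd_sol A k₀ z hz' m]
  have key : ‖linProd A k₀ m‖ ≤ (2 * B^N) * lamA^m := by
    have hq := Nat.div_add_mod m N
    set q := m / N with hqdef
    set r := m % N with hrdef
    have hrN : r < N := Nat.mod_lt _ hNpos
    have h1 : linProd A k₀ m = (linProd A (k₀+N*q) r).comp (linProd A k₀ (N*q)) := by
      rw [show m = N*q + r from hq.symm, linProd_add]
    have e2 : lamA ^ (N*(q+1)) = (1/2:ℝ)^(q+1) := by rw [pow_mul, hlamAN]
    have e1 : lamA ^ (N*(q+1)) ≤ lamA ^ m := by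
      refine pow_le_pow_of_le_one hlamA0.le hlamA1.le ?_
      have : N*(q+1) = N*q + N := by ring
      omega
    have e3 : (1/2:ℝ)^q ≤ 2 * lamA^m := by
      have : (1/2:ℝ)^q = 2 * (1/2:ℝ)^(q+1) := by ring
      rw [this, ← e2]
      linarith
    rw [h1]
    calc ‖(linProd A (k₀+N*q) r).comp (linProd A k₀ (N*q))‖
        ≤ ‖linProd A (k₀+N*q) r‖ * ‖linProd A k₀ (N*q)‖ :=
          ContinuousLinearMap.opNorm_comp_le _ _
    _ ≤ B^r * (1/2:ℝ)^q :=
          mul_le_mul (linProd_norm_le A B hB1 hAb _ _) (hblock _ _)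
            (norm_nonneg _) (pow_nonneg hB0.le _)
    _ ≤ B^N * (2 * lamA^m) := by
          refine mul_le_mul (pow_le_pow_right₀ hB1 hrN.le) e3
            (pow_nonneg (by norm_num) _) (pow_nonneg hB0.le _)
    _ = (2 * B^N) * lamA^m := by ring
  calc ‖linProd A k₀ m (z k₀)‖ ≤ ‖linProd A k₀ m‖ * ‖z k₀‖ :=
        (linProd A k₀ m).le_opNorm _
  _ ≤ (2 * B^N) * lamA^m * ‖z k₀‖ :=
        mul_le_mul_of_nonneg_right key (norm_nonneg _)
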